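/- Let α ∈ (0,1], n ∈ ℕ, μ, ν, c ∈ ℝ with c not a nonpositive integer. Then for x > 0 with |x^α| < 1, D^{nα}[ x^{α(μ+n−1)} ₂F₁(μ, ν; c; x^α) ] = α^n (μ)_n x^{α(μ−1)} ₂F₁(μ+n, ν; c; x^α). -/

import Mathlib

open scoped Real BigOperators

noncomputable def poch (b : ℝ) (n : ℕ) : ℝ := (ascPochhammer ℝ n).eval b

noncomputable def F21 (μ ν c z : ℝ) : ℝ :=
  ∑' n : ℕ, poch μ n * poch ν n / (poch c n * (n.factorial : ℝ)) * z ^ n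

noncomputable def confD (α : ℝ) (f : ℝ → ℝ) : ℝ → ℝ :=
  fun x => x ^ (1 - α) * deriv f x

noncomputable def theta (α : ℝ) (f : ℝ → ℝ) : ℝ → ℝ :=
  fun x => (1 / α) * x ^ α * confD α f x

open Filter Finset Set

/-! ### Pochhammer lemmas -/

lemma poch_zero (b : ℝ) : poch b 0 = 1 := by simp [poch]

lemma poch_succ (b : ℝ) (k : ℕ) : poch b (k+1) = poch b k * (b + k) := by
  simp [poch, ascPochhammer_succ_right]

lemma poch_add (b : ℝ) (m k : ℕ) : poch b (m+k) = poch b m * poch (b+m) k := by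
  have := ascPochhammer_mul ℝ m k
  have h2 := congrArg (Polynomial.eval b) this
  simpa [poch, Polynomial.eval_mul, Polynomial.eval_comp] using h2.symm

lemma prod_shift (a : ℝ) (n : ℕ) :
    (∏ j ∈ Finset.range n, (a + (n:ℝ) - 1 - (j:ℝ))) = poch a n := by
  induction n with
  | zero => simp [poch_zero]
  | succ m ih =>
      rw [Finset.prod_range_succ', poch_succ, ← ih]
      refine congrArg₂ (· * ·) (Finset.prod_congr rfl fun j _ => by push_cast; ring)
        (by push_cast; ring)

/-! ### Geometric-type summability -/

def SummGeom (b : ℕ → ℝ) : Prop := ∀ r : ℝ, 0 ≤ r → r < 1 → Summable fun k => |b k| * r ^ k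

lemma SummGeom.congr {b b' : ℕ → ℝ} (h : ∀ k, b k = b' k) (hb : SummGeom b) : SummGeom b' := by
  intro r h0 h1
  exact (hb r h0 h1).congr fun k => by rw [h k]

lemma SummGeom.mul_linear {b : ℕ → ℝ} (hb : SummGeom b) (a t : ℝ) :
    SummGeom (fun k => a * (t + k) * b k) := by
  intro r h0 h1
  set r' : ℝ := (1 + r) / 2 with hr'
  have hrr' : r < r' := by simp [hr']; linarith
  have hr'1 : r' < 1 := by simp [hr']; linarith
  have hr'0 : 0 < r' := by simp [hr']; linarith
  set q : ℝ := r / r' with hq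
  have hq0 : 0 ≤ q := div_nonneg h0 hr'0.le
  have hq1 : q < 1 := (div_lt_one hr'0).2 hrr'
  have hsum : Summable (fun k : ℕ => |a| * (|t| + k) * q ^ k) := by
    have h1' : Summable (fun k : ℕ => q ^ k) := summable_geometric_of_lt_one hq0 hq1
    have h2' : Summable (fun k : ℕ => (k : ℝ) * q ^ k) := by
      have := summable_pow_mul_geometric_of_norm_lt_one (R := ℝ) 1 (by
        rw [Real.norm_eq_abs, abs_of_nonneg hq0]; exact hq1)
      simpa using this
    have := ((h1'.mul_left (|a| * |t|)).add (h2'.mul_left |a|))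
    exact this.congr fun k => by ring
  obtain ⟨C, hC⟩ : ∃ C, ∀ k : ℕ, |a| * (|t| + k) * q ^ k ≤ C := by
    have h0' := hsum.tendsto_atTop_zero
    obtain ⟨C, hC⟩ := h0'.bddAbove_range
    exact ⟨C, fun k => hC ⟨k, rfl⟩⟩
  have hsum' := (hb r' hr'0.le hr'1).mul_left C
  refine Summable.of_nonneg_of_le (fun k => by positivity) (fun k => ?_) hsum'
  have hrq : r = q * r' := by rw [hq, div_mul_cancel₀ _ hr'0.ne']
  calc |a * (t + k) * b k| * r ^ k
      = (|a| * |t + (k:ℝ)| * q ^ k) * (|b k| * r' ^ k) := by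
        rw [hrq, mul_pow, abs_mul, abs_mul]; ring
    _ ≤ (|a| * (|t| + k) * q ^ k) * (|b k| * r' ^ k) := by
        have : |t + (k:ℝ)| ≤ |t| + k := by
          calc |t + (k:ℝ)| ≤ |t| + |(k:ℝ)| := abs_add_le _ _
          _ = |t| + k := by rw [abs_of_nonneg (by positivity : (0:ℝ) ≤ (k:ℝ))]
        gcongr
    _ ≤ C * (|b k| * r' ^ k) := by
        have := hC k
        gcongr

lemma summGeom_of_ratio {b u : ℕ → ℝ} (hrec : ∀ k, b (k+1) = b k * u k)
    (hu : Tendsto (fun k => |u k|) atTop (nhds 1)) : SummGeom b := by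
  intro r h0 h1
  set r' : ℝ := (1 + r) / 2 with hr'
  have hrr' : r < r' := by simp [hr']; linarith
  have hr'1 : r' < 1 := by simp [hr']; linarith
  have hur : Tendsto (fun k => |u k| * r) atTop (nhds r) := by
    simpa using hu.mul_const r
  have hev : ∀ᶠ k in atTop, |u k| * r ≤ r' := hur.eventually_le_const hrr'
  refine summable_of_ratio_norm_eventually_le hr'1 ?_
  filter_upwards [hev] with k hk
  have h1' : |b (k+1)| * r ^ (k+1) = (|u k| * r) * (|b k| * r ^ k) := by
    rw [hrec k, abs_mul, pow_succ]; ring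
  have h2' : (0:ℝ) ≤ |b k| * r ^ k := by positivity
  rw [Real.norm_eq_abs, Real.norm_eq_abs, abs_of_nonneg (by positivity),
    abs_of_nonneg h2', h1']
  exact mul_le_mul_of_nonneg_right hk h2'

/-! ### Derivatives of generalized power series -/

lemma summable_G {α : ℝ} (hα : 0 < α) {b : ℕ → ℝ} (hb : SummGeom b) (s : ℝ) {x : ℝ}
    (hx : x ∈ Ioo (0:ℝ) 1) : Summable fun k : ℕ => b k * x ^ (α*(s+(k:ℝ))) := by
  have hx0 : 0 < x := hx.1
  have hxa : x ^ α < 1 := Real.rpow_lt_one hx0.le hx.2 hα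
  have hxa0 : 0 ≤ x ^ α := Real.rpow_nonneg hx0.le α
  have h := (hb (x^α) hxa0 hxa).mul_right (x ^ (α*s))
  apply Summable.of_abs
  refine h.congr fun k => ?_
  rw [abs_mul, abs_of_nonneg (Real.rpow_nonneg hx0.le _),
    show α*(s+(k:ℝ)) = α*s + α*k by ring, Real.rpow_add hx0,
    show x ^ (α*(k:ℝ)) = (x^α)^k from by rw [Real.rpow_mul hx0.le, Real.rpow_natCast]]
  ring

lemma hasDerivAt_G {α : ℝ} (hα : 0 < α) {b : ℕ → ℝ} (hb : SummGeom b) (s : ℝ) {x : ℝ}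
    (hx : x ∈ Ioo (0:ℝ) 1) :
    HasDerivAt (fun y => ∑' k : ℕ, b k * y ^ (α*(s+(k:ℝ))))
      (∑' k : ℕ, b k * ((α*(s+(k:ℝ))) * x ^ (α*(s+(k:ℝ))-1))) x := by
  obtain ⟨hx0, hx1⟩ := hx
  set z : ℝ := (1+x)/2 with hz
  have hxz : x < z := by rw [hz]; linarith
  have hz1 : z < 1 := by rw [hz]; linarith
  have hz0 : 0 < z := by rw [hz]; linarith
  set t : Set ℝ := Ioo (x/2) z with ht
  have hxt : x ∈ t := ⟨by linarith, hxz⟩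
  have hx2 : 0 < x/2 := by linarith
  set ρ : ℝ := z ^ α with hρ
  have hρ0 : 0 ≤ ρ := Real.rpow_nonneg hz0.le α
  have hρ1 : ρ < 1 := Real.rpow_lt_one hz0.le hz1 hα
  set M : ℝ := max ((x/2) ^ (α*s-1)) (z ^ (α*s-1)) with hM
  have hM0 : 0 ≤ M := le_trans (Real.rpow_nonneg hx2.le _) (le_max_left _ _)
  set u : ℕ → ℝ := fun k => |α * (|s| + (k:ℝ)) * b k| * ρ^k * M with hudef
  have hu : Summable u := ((hb.mul_linear α |s| ρ hρ0 hρ1).mul_right M)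
  have key := hasDerivAt_tsum_of_isPreconnected hu isOpen_Ioo (isPreconnected_Ioo (a := x/2) (b := z))
    (g := fun k y => b k * y ^ (α*(s+(k:ℝ))))
    (g' := fun k y => b k * ((α*(s+(k:ℝ))) * y ^ (α*(s+(k:ℝ))-1)))
    (fun k y hy => ?_) (fun k y hy => ?_) hxt (summable_G hα hb s ⟨hx0, hx1⟩) hxt
  · exact key
  · have hy0 : 0 < y := lt_trans hx2 hy.1
    exact (Real.hasDerivAt_rpow_const (Or.inl hy0.ne')).const_mul (b k)
  · have hy0 : 0 < y := lt_trans hx2 hy.1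
    have hy1 : y < 1 := lt_trans hy.2 hz1
    have e1 : y ^ (α*(s+(k:ℝ))-1) = y ^ (α*s-1) * (y^α)^k := by
      rw [show α*(s+(k:ℝ))-1 = (α*s-1) + α*k by ring, Real.rpow_add hy0,
        show y ^ (α*(k:ℝ)) = (y^α)^k from by rw [Real.rpow_mul hy0.le, Real.rpow_natCast]]
    have e2 : y ^ (α*s-1) ≤ M := by
      rcases le_or_gt 0 (α*s-1) with h | h
      · exact le_trans (Real.rpow_le_rpow hy0.le hy.2.le h) (le_max_right _ _)
      · exact le_trans (Real.rpow_le_rpow_of_nonpos hx2 hy.1.le h.le) (le_max_left _ _)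
    have e3 : (y^α)^k ≤ ρ^k :=
      pow_le_pow_left₀ (Real.rpow_nonneg hy0.le α) (Real.rpow_le_rpow hy0.le hy.2.le hα.le) k
    have e4 : |α*(s+(k:ℝ))| ≤ α * (|s| + (k:ℝ)) := by
      rw [abs_mul, abs_of_nonneg hα.le]
      have : |s + (k:ℝ)| ≤ |s| + (k:ℝ) := by
        calc |s + (k:ℝ)| ≤ |s| + |(k:ℝ)| := abs_add_le _ _
          _ = |s| + k := by rw [abs_of_nonneg (by positivity : (0:ℝ) ≤ (k:ℝ))]
      exact mul_le_mul_of_nonneg_left this hα.le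
    rw [Real.norm_eq_abs, abs_mul, abs_mul,
      abs_of_nonneg (Real.rpow_nonneg hy0.le _), e1]
    show _ ≤ |α * (|s| + (k:ℝ)) * b k| * ρ^k * M
    have harr : |α * (|s| + (k:ℝ)) * b k| = α * (|s| + (k:ℝ)) * |b k| := by
      rw [abs_mul, abs_of_nonneg (by positivity : (0:ℝ) ≤ α * (|s| + (k:ℝ)))]
    rw [harr]
    calc |b k| * (|α*(s+(k:ℝ))| * (y ^ (α*s-1) * (y^α)^k))
        ≤ |b k| * ((α * (|s| + (k:ℝ))) * (M * ρ^k)) := by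
          gcongr
      _ = α * (|s| + (k:ℝ)) * |b k| * ρ ^ k * M := by ring

lemma confD_congr {α : ℝ} {f g : ℝ → ℝ} {U : Set ℝ} (hU : IsOpen U) (h : EqOn f g U) :
    EqOn (confD α f) (confD α g) U := by
  intro x hx
  unfold confD
  rw [(h.eventuallyEq_of_mem (hU.mem_nhds hx)).deriv_eq]

lemma iterate_confD_congr {α : ℝ} {f g : ℝ → ℝ} {U : Set ℝ} (hU : IsOpen U)
    (h : EqOn f g U) (n : ℕ) : EqOn ((confD α)^[n] f) ((confD α)^[n] g) U := by
  induction n with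
  | zero => simpa
  | succ m ih =>
      rw [Function.iterate_succ']
      exact confD_congr hU ih

lemma confD_G {α : ℝ} (hα : 0 < α) {b : ℕ → ℝ} (hb : SummGeom b) (s : ℝ) :
    EqOn (confD α (fun y => ∑' k : ℕ, b k * y ^ (α*(s+(k:ℝ)))))
      (fun y => ∑' k : ℕ, (α*(s+(k:ℝ)) * b k) * y ^ (α*((s-1)+(k:ℝ)))) (Ioo (0:ℝ) 1) := by
  intro x hx
  have hx0 : 0 < x := hx.1
  unfold confD
  rw [(hasDerivAt_G hα hb s hx).deriv, ← tsum_mul_left]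
  refine tsum_congr fun k => ?_
  rw [show α*((s-1)+(k:ℝ)) = (1-α) + (α*(s+(k:ℝ))-1) by ring, Real.rpow_add hx0]
  ring

lemma iter_G {α : ℝ} (hα : 0 < α) {b : ℕ → ℝ} (hb : SummGeom b) (s : ℝ) (n : ℕ) :
    EqOn ((confD α)^[n] (fun y => ∑' k : ℕ, b k * y ^ (α*(s+(k:ℝ)))))
      (fun y => ∑' k : ℕ,
        ((α^n * ∏ j ∈ Finset.range n, (s - (j:ℝ) + (k:ℝ))) * b k) * y ^ (α*((s-(n:ℝ))+(k:ℝ))))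
      (Ioo (0:ℝ) 1) := by
  induction n with
  | zero =>
      intro x hx
      simp only [Function.iterate_zero, id_eq, Nat.cast_zero, pow_zero, Finset.range_zero,
        Finset.prod_empty, one_mul, sub_zero]
  | succ n ih =>
      have hbn : SummGeom (fun k => (α^n * ∏ j ∈ Finset.range n, (s - (j:ℝ) + (k:ℝ))) * b k) := by
        clear ih
        induction n with
        | zero => exact hb.congr (fun k => by simp)
        | succ m ihm =>
            refine (ihm.mul_linear α (s - (m:ℝ))).congr fun k => ?_
            rw [Finset.prod_range_succ]
            push_cast
            ring
      intro x hx
      rw [Function.iterate_succ_apply']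
      have step1 := confD_congr (α := α) isOpen_Ioo ih hx
      rw [step1]
      have step2 := confD_G hα hbn (s - (n:ℝ)) hx
      rw [step2]
      refine tsum_congr fun k => ?_
      rw [Finset.prod_range_succ]
      generalize (∏ j ∈ Finset.range n, (s - (j:ℝ) + (k:ℝ))) = P
      push_cast
      ring_nf

/-! ### The hypergeometric coefficients -/

section
variable {μ ν c : ℝ}

lemma hcz (hc : ∀ k : ℕ, c ≠ -(k : ℝ)) (k : ℕ) : c + (k:ℝ) ≠ 0 := fun h => hc k (by linarith)

lemma poch_c_ne_zero (hc : ∀ k : ℕ, c ≠ -(k : ℝ)) (k : ℕ) : poch c k ≠ 0 := by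
  induction k with
  | zero => rw [poch_zero]; norm_num
  | succ m ih => rw [poch_succ]; exact mul_ne_zero ih (hcz hc m)

lemma b_rec (hc : ∀ k : ℕ, c ≠ -(k : ℝ)) (k : ℕ) :
    poch μ (k+1) * poch ν (k+1) / (poch c (k+1) * ((k+1).factorial : ℝ))
      = poch μ k * poch ν k / (poch c k * (k.factorial : ℝ))
        * (((μ+(k:ℝ))*(ν+(k:ℝ)))/((c+(k:ℝ))*((k:ℝ)+1))) := by
  have h1 := poch_c_ne_zero hc k
  have h2 := hcz hc k
  have h3 : ((k.factorial : ℝ)) ≠ 0 := Nat.cast_ne_zero.2 k.factorial_ne_zero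
  have h4 : ((k:ℝ)+1) ≠ 0 := by positivity
  rw [poch_succ, poch_succ, poch_succ, Nat.factorial_succ]
  push_cast
  field_simp

lemma u_tendsto (hc : ∀ k : ℕ, c ≠ -(k : ℝ)) :
    Tendsto (fun k : ℕ => |((μ+(k:ℝ))*(ν+(k:ℝ)))/((c+(k:ℝ))*((k:ℝ)+1))|)
      atTop (nhds 1) := by
  have hnat : Tendsto (fun k : ℕ => (k:ℝ)) atTop atTop := tendsto_natCast_atTop_atTop
  have h1 : Tendsto (fun k : ℕ => (μ-1)/((k:ℝ)+1)) atTop (nhds 0) :=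
    Tendsto.div_atTop tendsto_const_nhds (tendsto_atTop_add_const_right atTop 1 hnat)
  have h2 : Tendsto (fun k : ℕ => (ν-c)/(c+(k:ℝ))) atTop (nhds 0) :=
    Tendsto.div_atTop tendsto_const_nhds (tendsto_atTop_add_const_left atTop c hnat)
  have h3 : Tendsto (fun k : ℕ => (1 + (μ-1)/((k:ℝ)+1)) * (1 + (ν-c)/(c+(k:ℝ)))) atTop
      (nhds ((1+0)*(1+0))) := (tendsto_const_nhds.add h1).mul (tendsto_const_nhds.add h2)
  norm_num at h3
  have h4 : Tendsto (fun k : ℕ => ((μ+(k:ℝ))*(ν+(k:ℝ)))/((c+(k:ℝ))*((k:ℝ)+1))) atTop (nhds 1) := by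
    refine h3.congr fun k => ?_
    have h2' := hcz hc k
    have h4' : ((k:ℝ)+1) ≠ 0 := by positivity
    field_simp
    ring
  simpa using h4.abs

end

theorem stmt4 (α : ℝ) (hα : α ∈ Set.Ioc (0:ℝ) 1) (n : ℕ) (μ ν c : ℝ)
    (hc : ∀ k : ℕ, c ≠ -(k : ℝ)) (x : ℝ) (hx : 0 < x) (hx1 : |x ^ α| < 1) :
    (confD α)^[n] (fun y => y ^ (α * (μ + n - 1)) * F21 μ ν c (y ^ α)) x
      = α ^ n * poch μ n * x ^ (α * (μ - 1)) * F21 (μ + n) ν c (x ^ α) := by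
  obtain ⟨hα0, hα1⟩ := hα
  have hx1' : x < 1 := by
    by_contra h
    push_neg at h
    have h1 := Real.one_le_rpow h hα0.le
    have h2 : x ^ α < 1 := lt_of_abs_lt hx1
    linarith
  have hxI : x ∈ Ioo (0:ℝ) 1 := ⟨hx, hx1'⟩
  set b : ℕ → ℝ := fun k => poch μ k * poch ν k / (poch c k * (k.factorial : ℝ)) with hbdef
  have hb : SummGeom b :=
    summGeom_of_ratio (u := fun k => ((μ+(k:ℝ))*(ν+(k:ℝ)))/((c+(k:ℝ))*((k:ℝ)+1)))
      (fun k => b_rec hc k) (u_tendsto hc)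
  set s : ℝ := μ + (n:ℝ) - 1 with hsdef
  have hEq : EqOn (fun y => y ^ (α * (μ + (n:ℝ) - 1)) * F21 μ ν c (y ^ α))
      (fun y => ∑' k : ℕ, b k * y ^ (α*(s+(k:ℝ)))) (Ioo (0:ℝ) 1) := by
    intro y hy
    have hy0 : 0 < y := hy.1
    simp only [F21]
    rw [← tsum_mul_left]
    refine tsum_congr fun k => ?_
    rw [show α*(s+(k:ℝ)) = α*(μ+(n:ℝ)-1) + α*(k:ℝ) by rw [hsdef]; ring,
      Real.rpow_add hy0,
      show y ^ (α*(k:ℝ)) = (y^α)^k from by rw [Real.rpow_mul hy0.le, Real.rpow_natCast]]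
    ring
  rw [iterate_confD_congr isOpen_Ioo hEq n hxI, iter_G hα0 hb s n hxI]
  simp only [F21]
  rw [← tsum_mul_left]
  refine tsum_congr fun k => ?_
  have hprod : (∏ j ∈ Finset.range n, (s - (j:ℝ) + (k:ℝ))) = poch (μ+(k:ℝ)) n := by
    rw [← prod_shift (μ+(k:ℝ)) n]
    exact Finset.prod_congr rfl fun j _ => by rw [hsdef]; ring
  have hpoch : poch (μ+(k:ℝ)) n * poch μ k = poch μ n * poch (μ+(n:ℝ)) k := by
    have e1 := poch_add μ k n
    have e2 := poch_add μ n k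
    rw [Nat.add_comm] at e1
    rw [mul_comm, ← e1, e2]
  have hexp : x ^ (α*((s-(n:ℝ))+(k:ℝ))) = x ^ (α*(μ-1)) * (x^α)^k := by
    rw [show α*((s-(n:ℝ))+(k:ℝ)) = α*(μ-1) + α*(k:ℝ) by rw [hsdef]; ring,
      Real.rpow_add hx,
      show x ^ (α*(k:ℝ)) = (x^α)^k from by rw [Real.rpow_mul hx.le, Real.rpow_natCast]]
  rw [hprod, hexp, hbdef]
  linear_combination (α^n * poch ν k * (x ^ (α*(μ-1)) * (x^α)^k) /
    (poch c k * (k.factorial:ℝ))) * hpoch
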